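/- arXiv:2409.12195 — 2 statements merged into one kernel-verified Lean document; each statement's English description precedes it below -/
import Mathlib

section
/- Let I be a finite set of d features, let 1 ≤ d̃ ≤ d, and let s be a real-valued score function on the size-d̃ subsets of I, where each feature f contained in a subset σ is assigned the score s_σ(f) = s(σ). Define the inclusion value of a feature f at dimension d̃ as IV_{d̃}(f) = (∑_{σ ⊆ I, |σ| = d̃, f ∈ σ} s(σ)) / C(d−1, d̃−1). Suppose the monotonicity assumption holds: there exists a subset Ω of I with |Ω| = d̃ such that for all size-d̃ subsets F, F' of I, if F ∩ Ω ⊆ F' ∩ Ω then s(F) ≤ s(F'). Then every feature in Ω has inclusion value at least as large as every feature outside Ω: for all f ∈ Ω and g ∈ I \ Ω, IV_{d̃}(g) ≤ IV_{d̃}(f). -/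
open Finset

/-- The inclusion value of a feature `f` at dimension `dt` (playing the role of `d̃`):
the sum of the scores `s σ` over all size-`dt` subsets `σ` of the feature set containing
`f`, divided by the binomial coefficient `C(d-1, dt-1)`. -/
noncomputable def inclusionValue {I : Type*} [Fintype I] [DecidableEq I]
    (d dt : ℕ) (s : Finset I → ℝ) (f : I) : ℝ :=
  (∑ σ ∈ (Finset.univ.powersetCard dt).filter (fun σ => f ∈ σ), s σ) /
    ((d - 1).choose (dt - 1))

/-- **Theorem 4 (Optimality), second conclusion.** Under the monotonicity assumption with
witness `Ω`, every feature in `Ω` has inclusion value at least as large as every feature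
outside `Ω`; i.e. `Ω` is the set of `dt` features with the highest inclusion value. -/
theorem ivfs_optimality_inclusionValue {I : Type*} [Fintype I] [DecidableEq I]
    (d dt : ℕ) (hd : Fintype.card I = d) (hdt1 : 1 ≤ dt) (hdt2 : dt ≤ d)
    (s : Finset I → ℝ) (Ω : Finset I) (hΩ : Ω.card = dt)
    (hmono : ∀ F F' : Finset I, F.card = dt → F'.card = dt →
      F ∩ Ω ⊆ F' ∩ Ω → s F ≤ s F') :
    ∀ f ∈ Ω, ∀ g ∉ Ω, inclusionValue d dt s g ≤ inclusionValue d dt s f := by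
  intro f hf g hg
  have hfg : f ≠ g := fun h => hg (h ▸ hf)
  unfold inclusionValue
  have hc : (0 : ℝ) < ((d - 1).choose (dt - 1) : ℝ) := by
    exact_mod_cast Nat.choose_pos (Nat.sub_le_sub_right hdt2 1)
  apply div_le_div_of_nonneg_right ?_ hc.le
  -- swap map
  set A := (Finset.univ.powersetCard dt).filter (fun σ => g ∈ σ) with hA
  set B := (Finset.univ.powersetCard dt).filter (fun σ => f ∈ σ) with hB
  have memA : ∀ σ, σ ∈ A ↔ σ.card = dt ∧ g ∈ σ := by
    intro σ; simp [hA, Finset.mem_powersetCard, and_comm]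
  have memB : ∀ σ, σ ∈ B ↔ σ.card = dt ∧ f ∈ σ := by
    intro σ; simp [hB, Finset.mem_powersetCard, and_comm]
  let τ : Finset I → Finset I := fun σ => if f ∈ σ then σ else insert f (σ.erase g)
  let τ' : Finset I → Finset I := fun σ => if g ∈ σ then σ else insert g (σ.erase f)
  have hτmem : ∀ σ ∈ A, τ σ ∈ B := by
    intro σ hσ
    obtain ⟨hcard, hgσ⟩ := (memA σ).1 hσ
    rw [memB]
    by_cases hfσ : f ∈ σ
    · simp [τ, hfσ, hcard]
    · have hfe : f ∉ σ.erase g := fun h => hfσ (Finset.mem_of_mem_erase h)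
      constructor
      · simp only [τ, hfσ, if_false, Finset.card_insert_of_notMem hfe,
          Finset.card_erase_of_mem hgσ, hcard]
        omega
      · simp [τ, hfσ]
  have hle : ∀ σ ∈ A, s σ ≤ s (τ σ) := by
    intro σ hσ
    obtain ⟨hcard, hgσ⟩ := (memA σ).1 hσ
    have hτcard := ((memB (τ σ)).1 (hτmem σ hσ)).1
    apply hmono _ _ hcard hτcard
    by_cases hfσ : f ∈ σ
    · simp [τ, hfσ]
    · intro x hx
      simp only [Finset.mem_inter] at hx ⊢
      refine ⟨?_, hx.2⟩
      have hxg : x ≠ g := fun h => hg (h ▸ hx.2)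
      simp [τ, hfσ, Finset.mem_insert, Finset.mem_erase, hxg, hx.1]
  calc ∑ σ ∈ A, s σ ≤ ∑ σ ∈ A, s (τ σ) := Finset.sum_le_sum hle
    _ = ∑ σ ∈ B, s σ := by
        apply Finset.sum_nbij' τ τ' hτmem
        · -- τ' maps B to A
          intro σ hσ
          obtain ⟨hcard, hfσ⟩ := (memB σ).1 hσ
          rw [memA]
          by_cases hgσ : g ∈ σ
          · simp [τ', hgσ, hcard]
          · have hge : g ∉ σ.erase f := fun h => hgσ (Finset.mem_of_mem_erase h)
            constructor
            · simp only [τ', hgσ, if_false, Finset.card_insert_of_notMem hge,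
                Finset.card_erase_of_mem hfσ, hcard]
              omega
            · simp [τ', hgσ]
        · intro σ hσ
          obtain ⟨hcard, hgσ⟩ := (memA σ).1 hσ
          by_cases hfσ : f ∈ σ
          · simp [τ, τ', hfσ, hgσ]
          · have hgτ : g ∉ insert f (σ.erase g) := by
              simp [Finset.mem_insert, hfg.symm]
            have hfe : f ∉ σ.erase g := fun h => hfσ (Finset.mem_of_mem_erase h)
            simp only [τ, τ', if_neg hfσ, if_neg hgτ,
              Finset.erase_insert hfe, Finset.insert_erase hgσ]
        · intro σ hσ
          obtain ⟨hcard, hfσ⟩ := (memB σ).1 hσ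
          by_cases hgσ : g ∈ σ
          · simp [τ, τ', hfσ, hgσ]
          · have hfτ : f ∉ insert g (σ.erase f) := by
              simp [Finset.mem_insert, hfg]
            have hge : g ∉ σ.erase f := fun h => hgσ (Finset.mem_of_mem_erase h)
            simp only [τ, τ', if_neg hgσ, if_neg hfτ,
              Finset.erase_insert hge, Finset.insert_erase hfσ]
        · intro σ hσ; rfl
end

section
/- Let I be a finite set, let s be a real-valued function on the size-d̃ subsets of I, and suppose the monotonicity assumption holds with witness Ω ⊆ I, |Ω| = d̃: for all size-d̃ subsets F, F' of I, F ∩ Ω ⊆ F' ∩ Ω implies s(F) ≤ s(F'). Then for any f ∈ Ω and g ∉ Ω, the sum of s(σ) over all size-d̃ subsets σ of I containing g is at most the sum of s(σ) over all size-d̃ subsets σ of I containing f: ∑_{σ : |σ|=d̃, g∈σ} s(σ) ≤ ∑_{σ : |σ|=d̃, f∈σ} s(σ). -/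
open Finset

/-- **Unnormalized inclusion-value comparison** (Theorem 4). Under the monotonicity
assumption with witness `Ω` of cardinality `dt` (playing the role of `d̃`), for any
`f ∈ Ω` and `g ∉ Ω`, the sum of `s σ` over all size-`dt` subsets `σ` containing `g`
is at most the sum of `s σ` over all size-`dt` subsets `σ` containing `f`. -/
theorem ivfs_sum_inequality {I : Type*} [Fintype I] [DecidableEq I]
    (dt : ℕ) (s : Finset I → ℝ) (Ω : Finset I) (hΩ : Ω.card = dt)
    (hmono : ∀ F F' : Finset I, F.card = dt → F'.card = dt →
      F ∩ Ω ⊆ F' ∩ Ω → s F ≤ s F')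
    (f g : I) (hf : f ∈ Ω) (hg : g ∉ Ω) :
    ∑ σ ∈ (Finset.univ.powersetCard dt).filter (fun σ => g ∈ σ), s σ ≤
      ∑ σ ∈ (Finset.univ.powersetCard dt).filter (fun σ => f ∈ σ), s σ := by
  have hfg : f ≠ g := fun h => hg (h ▸ hf)
  set e := Equiv.swap f g with he
  have hmemg : ∀ σ : Finset I, σ ∈ (Finset.univ.powersetCard dt).filter (fun σ => g ∈ σ) →
      σ.card = dt ∧ g ∈ σ := by
    intro σ hσ
    simp only [mem_filter, mem_powersetCard_univ] at hσ
    exact hσ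
  have himg : ∀ σ : Finset I, σ.card = dt → g ∈ σ →
      σ.image e ∈ (Finset.univ.powersetCard dt).filter (fun σ => f ∈ σ) ∧
      σ ∩ Ω ⊆ σ.image e ∩ Ω := by
    intro σ hcard hgσ
    constructor
    · simp only [mem_filter, mem_powersetCard_univ]
      refine ⟨by rw [card_image_of_injective _ e.injective, hcard], ?_⟩
      exact mem_image.2 ⟨g, hgσ, by simp [he, Equiv.swap_apply_right]⟩
    · intro x hx
      rw [mem_inter] at hx ⊢
      refine ⟨?_, hx.2⟩
      rcases eq_or_ne x f with rfl | hxf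
      · exact mem_image.2 ⟨g, hgσ, by simp [he, Equiv.swap_apply_right]⟩
      · have hxg : x ≠ g := fun h => hg (h ▸ hx.2)
        exact mem_image.2 ⟨x, hx.1, by simp [he, Equiv.swap_apply_of_ne_of_ne hxf hxg]⟩
  calc ∑ σ ∈ (Finset.univ.powersetCard dt).filter (fun σ => g ∈ σ), s σ
      ≤ ∑ σ ∈ (Finset.univ.powersetCard dt).filter (fun σ => g ∈ σ), s (σ.image e) := by
        apply Finset.sum_le_sum
        intro σ hσ
        obtain ⟨hcard, hgσ⟩ := hmemg σ hσ
        obtain ⟨himem, hsub⟩ := himg σ hcard hgσ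
        have : (σ.image e).card = dt := (mem_powersetCard_univ.1 (mem_filter.1 himem).1)
        exact hmono σ (σ.image e) hcard this hsub
    _ = ∑ τ ∈ (Finset.univ.powersetCard dt).filter (fun σ => f ∈ σ), s τ := by
        apply Finset.sum_nbij' (i := fun σ => σ.image e) (j := fun τ => τ.image e)
        · intro σ hσ
          obtain ⟨hcard, hgσ⟩ := hmemg σ hσ
          exact (himg σ hcard hgσ).1
        · intro τ hτ
          simp only [mem_filter, mem_powersetCard_univ] at hτ ⊢
          refine ⟨by rw [card_image_of_injective _ e.injective, hτ.1], ?_⟩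
          exact mem_image.2 ⟨f, hτ.2, by simp [he, Equiv.swap_apply_left]⟩
        · intro σ _
          rw [Finset.image_image]
          have : e ∘ e = id := by
            funext x; simp [he]
          rw [this, Finset.image_id]
        · intro τ _
          rw [Finset.image_image]
          have : e ∘ e = id := by
            funext x; simp [he]
          rw [this, Finset.image_id]
        · intro σ _
          rfl
end
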